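/- Setting α = 1 in m_k = Σ_D (b(D)+1)·α^{a(D)} (sum over Dyck paths D of length 2k, a(D) down-steps from odd height, b(D) = k − a(D)) gives m_k = Σ_D (b(D)+1), and this equals the coefficient identity: 1 + Σ_{k≥1} m_k z^k = (1/2)(1 + 1/√(1 − 4z)); equivalently m_k = (1/2)·binomial(2k, k) for k ≥ 1. -/

import Mathlib

set_option maxHeartbeats 1000000


/-- The height of the lattice path with `±1` steps `f` after the first `i` steps
(`true` = up-step, `false` = down-step). -/
def pathHeight (r : ℕ) (f : Fin r → Bool) (i : ℕ) : ℤ :=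
  ∑ j ∈ Finset.univ.filter (fun j : Fin r => (j : ℕ) < i),
    (if f j then (1 : ℤ) else -1)

/-- A Dyck path of length `2k`, encoded by its step sequence. -/
def IsDyckPath (k : ℕ) (f : Fin (2 * k) → Bool) : Prop :=
  pathHeight (2 * k) f (2 * k) = 0 ∧ ∀ i : Fin (2 * k + 1), 0 ≤ pathHeight (2 * k) f i

instance (k : ℕ) : DecidablePred (IsDyckPath k) := fun f => by
  unfold IsDyckPath; infer_instance

/-- `a(D)`: the number of down-steps of the Dyck path `D` starting from an odd height. -/
def aCount (k : ℕ) (f : Fin (2 * k) → Bool) : ℕ :=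
  (Finset.univ.filter
    (fun j : Fin (2 * k) => f j = false ∧ Odd (pathHeight (2 * k) f (j : ℕ)))).card

open List DyckStep

def dcount : Bool → List DyckStep → ℕ
  | _, [] => 0
  | par, (U :: l) => dcount (!par) l
  | par, (D :: l) => (if par then 1 else 0) + dcount (!par) l

lemma dcount_append (l₁ l₂ : List DyckStep) (par : Bool) :
    dcount par (l₁ ++ l₂) = dcount par l₁ +
      dcount (if Even l₁.length then par else !par) l₂ := by
  induction l₁ generalizing par with
  | nil => simp [dcount]
  | cons s t ih =>
      have hpar : (if Even (t.length + 1) then par else !par)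
          = (if Even t.length then !par else par) := by
        rcases Nat.even_or_odd t.length with h | h
        · simp [Nat.even_add_one, h, Nat.not_odd_iff_even.2 h]
        · simp [Nat.even_add_one, Nat.not_even_iff_odd.2 h, h]
      cases s <;> simp [dcount, ih, hpar, add_assoc]

lemma dcount_add_dcount_not (l : List DyckStep) (par : Bool) :
    dcount par l + dcount (!par) l = l.count D := by
  induction l generalizing par with
  | nil => simp [dcount]
  | cons s t ih =>
      cases s <;> simp [dcount, count_cons]
      · rw [add_comm]; exact ih _
      · have := ih (!par); rw [Bool.not_not] at this; cases par <;> simp_all <;> omega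

namespace DyckWord

/-- number of down-steps at odd height -/
def da (p : DyckWord) : ℕ := dcount false p.toList
/-- number of down-steps at even height -/
def db (p : DyckWord) : ℕ := dcount true p.toList

lemma even_length (p : DyckWord) : Even p.toList.length :=
  ⟨p.semilength, by have := p.two_mul_semilength_eq_length; omega⟩

lemma da_add (p q : DyckWord) : (p + q).da = p.da + q.da := by
  show dcount false (p.toList ++ q.toList) = _
  rw [dcount_append, if_pos p.even_length]; rfl

lemma db_add (p q : DyckWord) : (p + q).db = p.db + q.db := by
  show dcount true (p.toList ++ q.toList) = _
  rw [dcount_append, if_pos p.even_length]; rfl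

lemma da_nest (p : DyckWord) : p.nest.da = p.db + 1 := by
  show dcount false ([U] ++ p.toList ++ [D]) = _
  rw [List.append_assoc]
  show dcount true (p.toList ++ [D]) = _
  rw [dcount_append, if_pos p.even_length]
  simp [dcount, db]

lemma db_nest (p : DyckWord) : p.nest.db = p.da := by
  show dcount true ([U] ++ p.toList ++ [D]) = _
  rw [List.append_assoc]
  show dcount false (p.toList ++ [D]) = _
  rw [dcount_append, if_pos p.even_length]
  simp [dcount, da]

lemma da_add_db (p : DyckWord) : p.da + p.db = p.semilength := by
  have := dcount_add_dcount_not p.toList false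
  rwa [← semilength_eq_count_D] at this

end DyckWord

open DyckWord

/-- pairs of Dyck words with total semilength `k` -/
abbrev DPair (k : ℕ) := {x : DyckWord × DyckWord // x.1.semilength + x.2.semilength = k}

/-- the first-return decomposition -/
def decompE (k : ℕ) : DPair k ≃ {p : DyckWord // p.semilength = k + 1} where
  toFun x := ⟨x.1.1.nest + x.1.2, by
    have := x.2
    simp only [semilength_add, semilength_nest]
    omega⟩
  invFun w := ⟨(w.1.insidePart, w.1.outsidePart), by
    have hw : w.1 ≠ 0 := by
      intro h
      have := w.2
      rw [h] at this
      simp at this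
    have := semilength_insidePart_add_semilength_outsidePart_add_one hw
    have h2 := w.2
    dsimp only
    omega⟩
  left_inv x := by
    obtain ⟨⟨p, q⟩, hx⟩ := x
    apply Subtype.ext
    have h1 : (p.nest + q).insidePart = p := by
      rw [insidePart_add nest_ne_zero, insidePart_nest]
    have h2 : (p.nest + q).outsidePart = q := by
      rw [outsidePart_add nest_ne_zero, outsidePart_nest, zero_add]
    simp [h1, h2]
  right_inv w := by
    obtain ⟨p, hp⟩ := w
    apply Subtype.ext
    have hw : p ≠ 0 := by
      intro h; rw [h] at hp; simp at hp
    exact nest_insidePart_add_outsidePart hw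

instance dpairFintype (k : ℕ) : Fintype (DPair k) := Fintype.ofEquiv _ (decompE k).symm

/-- the swap involution -/
def swapE (k : ℕ) : DPair k ≃ DPair k where
  toFun x := ⟨(x.1.2, x.1.1), by have := x.2; dsimp only; omega⟩
  invFun x := ⟨(x.1.2, x.1.1), by have := x.2; dsimp only; omega⟩
  left_inv x := by ext <;> rfl
  right_inv x := by ext <;> rfl





/-- the step list of `f` -/
def stepList {r : ℕ} (f : Fin r → Bool) : List DyckStep :=
  List.ofFn (fun j => if f j then U else D)

@[simp] lemma length_stepList {r : ℕ} (f : Fin r → Bool) : (stepList f).length = r := by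
  simp [stepList]

def hgt (l : List DyckStep) : ℤ := (l.count U : ℤ) - l.count D

@[simp] lemma pathHeight_zero (r : ℕ) (f : Fin r → Bool) : pathHeight r f 0 = 0 := by
  simp [pathHeight]

lemma pathHeight_succ (r : ℕ) (f : Fin r → Bool) (i : ℕ) :
    pathHeight r f (i + 1) = pathHeight r f i +
      (if h : i < r then (if f ⟨i, h⟩ then (1 : ℤ) else -1) else 0) := by
  unfold pathHeight
  by_cases h : i < r
  · rw [dif_pos h]
    have hins : (Finset.univ.filter (fun j : Fin r => (j : ℕ) < i + 1))
        = insert ⟨i, h⟩ (Finset.univ.filter (fun j : Fin r => (j : ℕ) < i)) := by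
      ext j
      simp only [Finset.mem_filter, Finset.mem_univ, true_and, Finset.mem_insert, Fin.ext_iff]
      omega
    rw [hins, Finset.sum_insert (by simp)]
    exact add_comm _ _
  · rw [dif_neg h, add_zero]
    apply Finset.sum_congr _ (fun _ _ => rfl)
    ext j
    have := j.isLt
    simp only [Finset.mem_filter, Finset.mem_univ, true_and]
    omega

lemma hgt_take_succ {r : ℕ} (f : Fin r → Bool) (i : ℕ) :
    hgt ((stepList f).take (i + 1)) = hgt ((stepList f).take i) +
      (if h : i < r then (if f ⟨i, h⟩ then (1 : ℤ) else -1) else 0) := by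
  rw [List.take_succ]
  by_cases h : i < r
  · have : (stepList f)[i]? = some (if f ⟨i, h⟩ then U else D) := by
      simp [stepList, List.getElem?_ofFn, List.ofFnNthVal, h]
    rw [this, dif_pos h]
    cases hf : f ⟨i, h⟩ <;>
      simp [hgt, List.count_append, hf] <;> push_cast <;> ring
  · have : (stepList f)[i]? = none := by
      simp [stepList, List.getElem?_ofFn, List.ofFnNthVal, h]
    rw [this, dif_neg h]
    simp
lemma pathHeight_eq_hgt {r : ℕ} (f : Fin r → Bool) (i : ℕ) :
    pathHeight r f i = hgt ((stepList f).take i) := by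
  induction i with
  | zero => simp [hgt]
  | succ i ih => rw [pathHeight_succ, hgt_take_succ, ih]

lemma pathHeight_parity {r : ℕ} (f : Fin r → Bool) (i : ℕ) (hi : i ≤ r) :
    Odd (pathHeight r f i) ↔ Odd i := by
  induction i with
  | zero => simp
  | succ i ih =>
      have h : i < r := by omega
      rw [pathHeight_succ, dif_pos h]
      have hih := ih (by omega)
      cases f ⟨i, h⟩ <;>
        simp [Int.odd_add, Int.odd_sub, Nat.odd_add_one, hih, Int.not_even_iff_odd,
          ← Int.not_odd_iff_even] <;> tauto

lemma hgt_stepList_eq_zero {k : ℕ} (f : Fin (2 * k) → Bool) (hf : IsDyckPath k f) :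
    hgt (stepList f) = 0 := by
  have := hf.1
  rw [pathHeight_eq_hgt] at this
  rwa [List.take_of_length_le (by simp)] at this

/-- the Dyck word corresponding to a Dyck path -/
def toWord {k : ℕ} (f : Fin (2 * k) → Bool) (hf : IsDyckPath k f) : DyckWord where
  toList := stepList f
  count_U_eq_count_D := by
    have := hgt_stepList_eq_zero f hf
    unfold hgt at this
    omega
  count_D_le_count_U i := by
    rcases le_or_gt i (2 * k) with h | h
    · have h0 := hf.2 ⟨i, by omega⟩
      rw [pathHeight_eq_hgt] at h0
      unfold hgt at h0
      simp only at h0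
      omega
    · rw [List.take_of_length_le (by simp; omega)]
      have := hgt_stepList_eq_zero f hf
      unfold hgt at this
      omega

lemma toWord_semilength {k : ℕ} (f : Fin (2 * k) → Bool) (hf : IsDyckPath k f) :
    (toWord f hf).semilength = k := by
  have h := (toWord f hf).two_mul_semilength_eq_length
  have : (toWord f hf).toList.length = 2 * k := by
    show (stepList f).length = 2 * k
    simp
  omega

lemma dcount_ofFn {n : ℕ} (g : Fin n → Bool) (par : Bool) :
    dcount par (List.ofFn (fun j => if g j then U else D))
      = (Finset.univ.filter
          (fun j : Fin n => g j = false ∧ xor par (decide (Odd (j : ℕ))) = true)).card := by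
  induction n generalizing par with
  | zero => simp [dcount]
  | succ n ih =>
      rw [List.ofFn_succ]
      rw [Finset.card_filter, Fin.sum_univ_succ, ← Finset.card_filter]
      have hhead : ∀ t : List DyckStep, dcount par ((if g 0 then U else D) :: t)
          = (if g 0 = false ∧ xor par (decide (Odd ((0 : Fin (n+1)) : ℕ))) = true
              then 1 else 0) + dcount (!par) t := by
        intro t
        cases hg : g 0 <;> cases par <;> simp [dcount]
      rw [hhead, ih (fun j => g j.succ) (!par)]
      congr 1
      rw [Finset.card_filter, Finset.card_filter]
      apply Finset.sum_congr rfl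
      intro j _
      congr 2
      have : ((j.succ : Fin (n+1)) : ℕ) = (j : ℕ) + 1 := rfl
      rw [this]
      rcases Nat.even_or_odd (j : ℕ) with h | h
      · cases par <;>
          simp [Nat.odd_add_one, h, Nat.not_odd_iff_even.2 h]
      · cases par <;>
          simp [Nat.odd_add_one, h, Nat.not_even_iff_odd.2 h]

lemma aCount_eq_da {k : ℕ} (f : Fin (2 * k) → Bool) (hf : IsDyckPath k f) :
    aCount k f = dcount false (stepList f) := by
  rw [aCount, stepList, dcount_ofFn]
  congr 1
  apply Finset.filter_congr
  intro j _
  have hj : ((j : ℕ)) ≤ 2 * k := le_of_lt j.isLt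
  rw [pathHeight_parity f (j : ℕ) hj]
  simp

noncomputable def NN (k : ℕ) : ℕ := Fintype.card {p : DyckWord // p.semilength = k}
noncomputable def AA (k : ℕ) : ℕ := ∑ w : {p : DyckWord // p.semilength = k}, w.1.da
noncomputable def BB (k : ℕ) : ℕ := ∑ w : {p : DyckWord // p.semilength = k}, w.1.db

lemma AA_add_BB (k : ℕ) : AA k + BB k = k * NN k := by
  rw [AA, BB, ← Finset.sum_add_distrib]
  have h : ∀ w : {p : DyckWord // p.semilength = k}, w.1.da + w.1.db = k := fun w => by
    rw [DyckWord.da_add_db, w.2]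
  rw [Finset.sum_congr rfl (fun w _ => h w), Finset.sum_const, smul_eq_mul, mul_comm,
    NN, Finset.card_univ]

lemma NN_succ_card (k : ℕ) : NN (k + 1) = Fintype.card (DPair k) :=
  (Fintype.card_congr (decompE k)).symm

lemma AA_succ (k : ℕ) : AA (k + 1) = BB (k + 1) + NN (k + 1) := by
  have hA : AA (k + 1) = (∑ x : DPair k, x.1.1.db) + (∑ x : DPair k, x.1.2.da)
      + Fintype.card (DPair k) := by
    rw [AA, ← Equiv.sum_comp (decompE k) (fun w => w.1.da)]
    have : ∀ x : DPair k, ((decompE k x) : DyckWord).da = x.1.1.db + x.1.2.da + 1 := fun x => by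
      show (x.1.1.nest + x.1.2).da = _
      rw [da_add, da_nest]; omega
    rw [Finset.sum_congr rfl (fun x _ => this x)]
    simp [Finset.sum_add_distrib, Finset.card_univ]
  have hB : BB (k + 1) = (∑ x : DPair k, x.1.1.da) + (∑ x : DPair k, x.1.2.db) := by
    rw [BB, ← Equiv.sum_comp (decompE k) (fun w => w.1.db)]
    have : ∀ x : DPair k, ((decompE k x) : DyckWord).db = x.1.1.da + x.1.2.db := fun x => by
      show (x.1.1.nest + x.1.2).db = _
      rw [db_add, db_nest]
    rw [Finset.sum_congr rfl (fun x _ => this x), Finset.sum_add_distrib]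
  have hswapb : ∑ x : DPair k, x.1.1.db = ∑ x : DPair k, x.1.2.db := by
    rw [← Equiv.sum_comp (swapE k) (fun x : DPair k => x.1.2.db)]
    exact Finset.sum_congr rfl fun x _ => rfl
  have hswapa : ∑ x : DPair k, x.1.2.da = ∑ x : DPair k, x.1.1.da := by
    rw [← Equiv.sum_comp (swapE k) (fun x : DPair k => x.1.1.da)]
    exact Finset.sum_congr rfl fun x _ => rfl
  rw [hA, hB, NN_succ_card, hswapb, hswapa]
  omega

lemma two_mul_BN (k : ℕ) (hk : 1 ≤ k) : 2 * (BB k + NN k) = Nat.choose (2 * k) k := by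
  obtain ⟨j, rfl⟩ : ∃ j, k = j + 1 := ⟨k - 1, by omega⟩
  have h1 := AA_add_BB (j + 1)
  have h2 := AA_succ j
  have h3 : 2 * (BB (j + 1) + NN (j + 1)) = (j + 1 + 1) * NN (j + 1) := by
    have he : (j + 1 + 1) * NN (j + 1) = (j + 1) * NN (j + 1) + NN (j + 1) := by ring
    rw [he, ← h1]; omega
  rw [h3, NN, DyckWord.card_dyckWord_semilength_eq_catalan,
    succ_mul_catalan_eq_centralBinom, Nat.centralBinom_eq_two_mul_choose]

def fromWord {k : ℕ} (w : DyckWord) (hw : w.semilength = k) : Fin (2 * k) → Bool :=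
  fun j => decide (w.toList[(j : ℕ)]'(by
    rw [← w.two_mul_semilength_eq_length, hw]; exact j.isLt) = U)

lemma stepList_fromWord {k : ℕ} (w : DyckWord) (hw : w.semilength = k) :
    stepList (fromWord w hw) = w.toList := by
  have hlen : w.toList.length = 2 * k := by rw [← w.two_mul_semilength_eq_length, hw]
  apply List.ext_getElem (by simp [hlen])
  intro i h1 h2
  simp only [stepList, List.getElem_ofFn]
  rcases DyckStep.dichotomy (w.toList[i]) with h | h <;> simp [fromWord, h]

lemma fromWord_toWord {k : ℕ} (f : Fin (2 * k) → Bool) (hf : IsDyckPath k f) :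
    fromWord (toWord f hf) (toWord_semilength f hf) = f := by
  funext j
  rcases hj : f j with _ | _ <;>
    · show decide ((stepList f)[(j : ℕ)]'_ = U) = _
      simp only [stepList, List.getElem_ofFn]
      simp [hj]

def pathEquiv (k : ℕ) :
    {f : Fin (2 * k) → Bool // IsDyckPath k f} ≃ {w : DyckWord // w.semilength = k} where
  toFun x := ⟨toWord x.1 x.2, toWord_semilength x.1 x.2⟩
  invFun y := ⟨fromWord y.1 y.2, by
    constructor
    · rw [pathHeight_eq_hgt, stepList_fromWord,
        List.take_of_length_le (by rw [← y.1.two_mul_semilength_eq_length, y.2])]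
      have := y.1.count_U_eq_count_D
      unfold hgt
      omega
    · intro i
      rw [pathHeight_eq_hgt, stepList_fromWord]
      have := y.1.count_D_le_count_U (i : ℕ)
      unfold hgt
      omega⟩
  left_inv x := Subtype.ext (fromWord_toWord x.1 x.2)
  right_inv y := Subtype.ext (DyckWord.ext (stepList_fromWord y.1 y.2))

lemma m_eq (k : ℕ) :
    (∑ f ∈ Finset.univ.filter (IsDyckPath k), ((k - aCount k f) + 1)) = BB k + NN k := by
  rw [Finset.sum_subtype (p := IsDyckPath k) (Finset.univ.filter (IsDyckPath k))
      (by intro x; simp) (fun f => (k - aCount k f) + 1)]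
  have hterm : ∀ x : {f : Fin (2 * k) → Bool // IsDyckPath k f},
      (k - aCount k x.1) + 1 = ((pathEquiv k x) : DyckWord).db + 1 := by
    intro x
    have h1 : aCount k x.1 = ((pathEquiv k x) : DyckWord).da := aCount_eq_da x.1 x.2
    have h2 : ((pathEquiv k x) : DyckWord).da + ((pathEquiv k x) : DyckWord).db = k := by
      rw [DyckWord.da_add_db]
      exact (pathEquiv k x).2
    omega
  rw [Finset.sum_congr rfl (fun x _ => hterm x),
    Equiv.sum_comp (pathEquiv k) (fun w : {w : DyckWord // w.semilength = k} => w.1.db + 1)]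
  rw [Finset.sum_add_distrib, Finset.sum_const, BB, NN, Finset.card_univ, smul_eq_mul, mul_one]

lemma part1 (k : ℕ) (hk : 1 ≤ k) :
    2 * (∑ f ∈ Finset.univ.filter (IsDyckPath k), ((k - aCount k f) + 1))
      = Nat.choose (2 * k) k := by
  rw [m_eq]; exact two_mul_BN k hk

local notation "cB" => Nat.centralBinom

lemma conv_claim1 (n : ℕ) :
    2 * ∑ i ∈ Finset.range (n + 1), i * (cB i * cB (n - i))
      = n * ∑ i ∈ Finset.range (n + 1), (cB i * cB (n - i)) := by
  have hrefl := Finset.sum_range_reflect (fun i => i * (cB i * cB (n - i))) (n + 1)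
  rw [two_mul]
  nth_rewrite 1 [← hrefl]
  rw [← Finset.sum_add_distrib, Finset.mul_sum]
  apply Finset.sum_congr rfl
  intro i hi
  rw [Finset.mem_range] at hi
  have h1 : n + 1 - 1 - i = n - i := by omega
  rw [h1]
  have h2 : n - (n - i) = i := by omega
  rw [h2, mul_comm (cB (n - i)) (cB i), ← add_mul]
  congr 1
  omega

lemma conv_claim2 (n : ℕ) :
    ∑ i ∈ Finset.range (n + 2), i * (cB i * cB (n + 1 - i))
      = ∑ j ∈ Finset.range (n + 1), ((4 * j + 2) * (cB j * cB (n - j))) := by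
  rw [Finset.sum_range_succ' (fun i => i * (cB i * cB (n + 1 - i)))]
  simp only [zero_mul, add_zero]
  apply Finset.sum_congr rfl
  intro j hj
  have h1 : n + 1 - (j + 1) = n - j := by omega
  rw [h1]
  calc (j + 1) * (cB (j + 1) * cB (n - j))
      = ((j + 1) * cB (j + 1)) * cB (n - j) := by ring
    _ = (2 * (2 * j + 1) * cB j) * cB (n - j) := by rw [Nat.succ_mul_centralBinom_succ]
    _ = (4 * j + 2) * (cB j * cB (n - j)) := by ring

lemma centralBinom_conv (n : ℕ) :
    ∑ i ∈ Finset.range (n + 1), (cB i * cB (n - i)) = 4 ^ n := by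
  induction n with
  | zero => simp
  | succ n ih =>
      have c1 := conv_claim1 (n + 1)
      have c2 := conv_claim2 n
      have c1' := conv_claim1 n
      have expand : ∑ j ∈ Finset.range (n + 1), ((4 * j + 2) * (cB j * cB (n - j)))
          = 4 * (∑ j ∈ Finset.range (n + 1), j * (cB j * cB (n - j)))
            + 2 * ∑ j ∈ Finset.range (n + 1), (cB j * cB (n - j)) := by
        rw [Finset.mul_sum, Finset.mul_sum, ← Finset.sum_add_distrib]
        apply Finset.sum_congr rfl
        intro j _
        ring
      have key : (n + 1) * ∑ i ∈ Finset.range (n + 2), (cB i * cB (n + 1 - i))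
          = (n + 1) * (4 * 4 ^ n) := by
        rw [← c1, c2, expand]
        calc 2 * (4 * (∑ j ∈ Finset.range (n + 1), j * (cB j * cB (n - j)))
              + 2 * ∑ j ∈ Finset.range (n + 1), (cB j * cB (n - j)))
            = 4 * (2 * ∑ j ∈ Finset.range (n + 1), j * (cB j * cB (n - j)))
              + 4 * ∑ j ∈ Finset.range (n + 1), (cB j * cB (n - j)) := by ring
          _ = 4 * (n * ∑ j ∈ Finset.range (n + 1), (cB j * cB (n - j)))
              + 4 * ∑ j ∈ Finset.range (n + 1), (cB j * cB (n - j)) := by rw [c1']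
          _ = (n + 1) * (4 * ∑ j ∈ Finset.range (n + 1), (cB j * cB (n - j))) := by ring
          _ = (n + 1) * (4 * 4 ^ n) := by rw [ih]
      have : 4 ^ (n + 1) = 4 * 4 ^ n := by ring
      rw [this]
      exact Nat.eq_of_mul_eq_mul_left (by omega) key

lemma cb_le_four_pow (k : ℕ) : (cB k : ℝ) ≤ 4 ^ k := by
  have h1 : cB k ≤ ∑ i ∈ Finset.range (2 * k + 1), (2 * k).choose i := by
    rw [Nat.centralBinom_eq_two_mul_choose]
    exact Finset.single_le_sum (f := fun i => (2 * k).choose i)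
      (fun i _ => Nat.zero_le _) (Finset.mem_range.2 (by omega))
  rw [Nat.sum_range_choose] at h1
  have h2 : (2 : ℕ) ^ (2 * k) = 4 ^ k := by rw [pow_mul]; norm_num
  rw [h2] at h1
  exact_mod_cast h1

lemma cb_succ_lt (k : ℕ) : cB (k + 1) < 4 * cB k := by
  have h := Nat.succ_mul_centralBinom_succ k
  have hpos := Nat.centralBinom_pos k
  have : (k + 1) * cB (k + 1) < (k + 1) * (4 * cB k) := by
    rw [h]; ring_nf; nlinarith
  exact Nat.lt_of_mul_lt_mul_left this

section analysis
variable {z : ℝ}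

lemma summable_norm_cb (hz : |z| < 1 / 4) :
    Summable (fun k : ℕ => ‖(cB k : ℝ) * z ^ k‖) := by
  have h4 : 4 * |z| < 1 := by linarith
  apply Summable.of_nonneg_of_le (fun k => norm_nonneg _) (fun k => ?_)
    (summable_geometric_of_lt_one (by positivity) h4)
  rw [norm_mul, norm_pow, Real.norm_eq_abs, Real.norm_eq_abs, Nat.abs_cast, mul_pow]
  exact mul_le_mul_of_nonneg_right (cb_le_four_pow k) (by positivity)

lemma summable_cb (hz : |z| < 1 / 4) : Summable (fun k : ℕ => (cB k : ℝ) * z ^ k) :=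
  (summable_norm_cb hz).of_norm

noncomputable def Fc (z : ℝ) : ℝ := ∑' k : ℕ, (cB k : ℝ) * z ^ k

lemma Fc_sq (hz : |z| < 1 / 4) : Fc z * Fc z = (1 - 4 * z)⁻¹ := by
  rw [Fc, tsum_mul_tsum_eq_tsum_sum_range_of_summable_norm (summable_norm_cb hz)
    (summable_norm_cb hz)]
  have hconv : ∀ n : ℕ, (∑ k ∈ Finset.range (n + 1),
      ((cB k : ℝ) * z ^ k) * ((cB (n - k) : ℝ) * z ^ (n - k))) = (4 * z) ^ n := by
    intro n
    have hterm : ∀ k ∈ Finset.range (n + 1),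
        ((cB k : ℝ) * z ^ k) * ((cB (n - k) : ℝ) * z ^ (n - k))
          = ((cB k * cB (n - k) : ℕ) : ℝ) * z ^ n := by
      intro k hk
      rw [Finset.mem_range] at hk
      have : z ^ k * z ^ (n - k) = z ^ n := by
        rw [← pow_add]; congr 1; omega
      push_cast
      rw [← this]; ring
    rw [Finset.sum_congr rfl hterm, ← Finset.sum_mul, ← Nat.cast_sum, centralBinom_conv]
    push_cast
    ring
  rw [tsum_congr hconv, tsum_geometric_of_norm_lt_one (by
    rw [Real.norm_eq_abs, abs_mul, abs_of_nonneg (by norm_num : (0:ℝ) ≤ 4)]; linarith)]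

lemma Fc_pos (hz : |z| < 1 / 4) : 0 < Fc z := by
  rcases eq_or_ne z 0 with rfl | hz0
  · have : Fc 0 = 1 := by
      rw [Fc, tsum_eq_single 0 (fun k hk => by simp [zero_pow hk])]
      simp
    rw [this]; norm_num
  · set f : ℕ → ℝ := fun k => (cB k : ℝ) * z ^ k with hf
    have hs := summable_cb hz
    have he : Summable (fun k => f (2 * k)) :=
      hs.comp_injective (fun a b h => by omega)
    have ho : Summable (fun k => f (2 * k + 1)) :=
      hs.comp_injective (fun a b h => by omega)
    have hterm : ∀ k : ℕ, 0 < f (2 * k) + f (2 * k + 1) := by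
      intro k
      have hz2 : 0 < z ^ (2 * k) := by
        rw [pow_mul]
        positivity
      have hlt : (cB (2 * k + 1) : ℝ) * |z| < cB (2 * k) := by
        have h1 : (cB (2 * k + 1) : ℝ) < 4 * cB (2 * k) := by exact_mod_cast cb_succ_lt (2 * k)
        have hb : (0 : ℝ) < cB (2 * k + 1) := by exact_mod_cast Nat.centralBinom_pos _
        calc (cB (2 * k + 1) : ℝ) * |z| < (cB (2 * k + 1) : ℝ) * (1 / 4) :=
              mul_lt_mul_of_pos_left hz hb
          _ < (4 * cB (2 * k)) * (1 / 4) := by linarith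
          _ = cB (2 * k) := by ring
      have habs : |(cB (2 * k + 1) : ℝ) * z| < cB (2 * k) := by
        rwa [abs_mul, Nat.abs_cast]
      have hps : z ^ (2 * k + 1) = z ^ (2 * k) * z := pow_succ z (2 * k)
      have hsum : 0 < (cB (2 * k) : ℝ) + (cB (2 * k + 1) : ℝ) * z := by
        nlinarith [neg_lt_of_abs_lt habs]
      show 0 < (cB (2 * k) : ℝ) * z ^ (2 * k) + (cB (2 * k + 1) : ℝ) * z ^ (2 * k + 1)
      rw [hps]
      nlinarith [mul_pos hz2 hsum]
    have hpos : 0 < ∑' k : ℕ, (f (2 * k) + f (2 * k + 1)) :=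
      Summable.tsum_pos (he.add ho) (fun k => (hterm k).le) 0 (hterm 0)
    rwa [Summable.tsum_add he ho, tsum_even_add_odd he ho] at hpos

lemma Fc_eq (hz : |z| < 1 / 4) : Fc z = 1 / Real.sqrt (1 - 4 * z) := by
  have h1 : (0 : ℝ) < 1 - 4 * z := by
    have := abs_lt.1 hz
    linarith
  calc Fc z = Real.sqrt (Fc z * Fc z) := (Real.sqrt_mul_self (Fc_pos hz).le).symm
    _ = Real.sqrt ((1 - 4 * z)⁻¹) := by rw [Fc_sq hz]
    _ = (Real.sqrt (1 - 4 * z))⁻¹ := Real.sqrt_inv _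
    _ = 1 / Real.sqrt (1 - 4 * z) := (one_div _).symm

end analysis

/-- Setting `α = 1` in `m_k = Σ_D (b(D)+1)·α^{a(D)}` (over Dyck paths `D` of length `2k`,
`b(D) = k − a(D)`) gives `m_k = Σ_D (b(D)+1)`, whose generating function satisfies
`1 + Σ_{k≥1} m_k z^k = (1/2)(1 + 1/√(1−4z))`; equivalently `m_k = (1/2)·binomial(2k,k)` for
`k ≥ 1`. -/
theorem marked_dyck_count_alpha_one
    (m : ℕ → ℕ)
    (hm : ∀ k : ℕ, m k = ∑ f ∈ Finset.univ.filter (IsDyckPath k),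
      ((k - aCount k f) + 1)) :
    (∀ k : ℕ, 1 ≤ k → 2 * m k = Nat.choose (2 * k) k) ∧
    (∀ z : ℝ, |z| < 1 / 4 →
      Summable (fun k : ℕ => (m (k + 1) : ℝ) * z ^ (k + 1)) ∧
      1 + ∑' k : ℕ, (m (k + 1) : ℝ) * z ^ (k + 1)
        = (1 / 2) * (1 + 1 / Real.sqrt (1 - 4 * z))) := by
  have hpart1 : ∀ k : ℕ, 1 ≤ k → 2 * m k = Nat.choose (2 * k) k := by
    intro k hk
    rw [hm k]
    exact part1 k hk
  refine ⟨hpart1, ?_⟩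
  intro z hz
  have hme : ∀ k : ℕ, (m (k + 1) : ℝ) = (cB (k + 1) : ℝ) / 2 := by
    intro k
    have h1 := hpart1 (k + 1) (by omega)
    have h2 : ((2 * m (k + 1) : ℕ) : ℝ) = ((2 * (k + 1)).choose (k + 1) : ℝ) := by
      exact_mod_cast congrArg (Nat.cast : ℕ → ℝ) h1
    rw [← Nat.centralBinom_eq_two_mul_choose] at h2
    push_cast at h2
    linarith
  have hsum : Summable (fun k : ℕ => (m (k + 1) : ℝ) * z ^ (k + 1)) := by
    have h1 : Summable (fun k : ℕ => (cB (k + 1) : ℝ) * z ^ (k + 1)) :=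
      (summable_nat_add_iff 1).2 (summable_cb hz)
    apply (h1.mul_left (1 / 2 : ℝ)).congr
    intro k
    rw [hme k]
    ring
  refine ⟨hsum, ?_⟩
  have hshift := Summable.tsum_eq_zero_add (summable_cb hz)
  have hzero : (cB 0 : ℝ) * z ^ 0 = 1 := by simp
  have htail : ∑' k : ℕ, (cB (k + 1) : ℝ) * z ^ (k + 1) = Fc z - 1 := by
    rw [Fc]
    rw [hzero] at hshift
    linarith [hshift]
  have hms : ∑' k : ℕ, (m (k + 1) : ℝ) * z ^ (k + 1) = (1 / 2) * (Fc z - 1) := by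
    have hc : ∀ k : ℕ, (m (k + 1) : ℝ) * z ^ (k + 1)
        = (1 / 2) * ((cB (k + 1) : ℝ) * z ^ (k + 1)) := by
      intro k
      rw [hme k]
      ring
    rw [tsum_congr hc, tsum_mul_left, htail]
  rw [hms, Fc_eq hz]
  ring
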